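/- Define H_n(x,δ) by H_{n+1} = 2x H_n - (2n+n(n-1)δ)H_{n-1} (H_{-1}=0, H_0=1) and L_n^{(-1/2)}(x,δ) by (n+1)L_{n+1}^{(-1/2)}(x,δ) + (x - (2n+1/2 + n(2n)δ)) L_n^{(-1/2)}(x,δ) + (n-1/2)(1+(n-1)δ)(1+(n-1/2)δ) L_{n-1}^{(-1/2)}(x,δ) = 0 (L_{-1}=0, L_0=1). Then for all r ≥ 0, 2^{-2r} H_{2r}(x,δ) = (-1)^r r! L_r^{(-1/2)}(x², δ), as polynomials in x. -/
import Mathlib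


open Finset

/-- Deformed Hermite polynomials `H_n(x,δ)` defined by the three-term recurrence
`H_{n+1} = 2x H_n - (2n + n(n-1)δ) H_{n-1}`, `H_{-1} = 0`, `H_0 = 1` (so `H_1 = 2x`). -/
noncomputable def deformedHermite (δ : ℝ) : ℕ → ℝ → ℝ
  | 0, _ => 1
  | 1, x => 2 * x
  | (n + 2), x =>
      2 * x * deformedHermite δ (n + 1) x
        - (2 * ((n : ℝ) + 1) + ((n : ℝ) + 1) * (n : ℝ) * δ) * deformedHermite δ n x

/-- Deformed Laguerre polynomials `L_n^{(α)}(x,δ)` defined by the three-term recurrence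
`(n+1) L_{n+1} + (x - (2n+α+1+n(2n+2α+1)δ)) L_n + (n+α)(1+(n-1)δ)(1+(n+α)δ) L_{n-1} = 0`,
`L_{-1} = 0`, `L_0 = 1`. -/
noncomputable def deformedLaguerre (α δ : ℝ) : ℕ → ℝ → ℝ
  | 0, _ => 1
  | 1, x => α + 1 - x
  | (n + 2), x =>
      (((2 * ((n : ℝ) + 1) + α + 1 + ((n : ℝ) + 1) * (2 * ((n : ℝ) + 1) + 2 * α + 1) * δ) - x)
          * deformedLaguerre α δ (n + 1) x
        - ((n : ℝ) + 1 + α) * (1 + (n : ℝ) * δ) * (1 + ((n : ℝ) + 1 + α) * δ)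
          * deformedLaguerre α δ n x) / ((n : ℝ) + 2)

lemma hermite_rec (δ : ℝ) (n : ℕ) (x : ℝ) :
    deformedHermite δ (n + 2) x = 2 * x * deformedHermite δ (n + 1) x
      - (2 * ((n : ℝ) + 1) + ((n : ℝ) + 1) * (n : ℝ) * δ) * deformedHermite δ n x := rfl

lemma laguerre_rec (α δ : ℝ) (n : ℕ) (x : ℝ) :
    deformedLaguerre α δ (n + 2) x =
      (((2 * ((n : ℝ) + 1) + α + 1 + ((n : ℝ) + 1) * (2 * ((n : ℝ) + 1) + 2 * α + 1) * δ) - x)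
          * deformedLaguerre α δ (n + 1) x
        - ((n : ℝ) + 1 + α) * (1 + (n : ℝ) * δ) * (1 + ((n : ℝ) + 1 + α) * δ)
          * deformedLaguerre α δ n x) / ((n : ℝ) + 2) := rfl

lemma aux (δ : ℝ) (r : ℕ) (x : ℝ) :
    deformedHermite δ (2 * r) x
      = (2 : ℝ) ^ (2 * r) * (-1 : ℝ) ^ r * (Nat.factorial r : ℝ)
        * deformedLaguerre (-1/2) δ r (x ^ 2) := by
  induction r using Nat.twoStepInduction with
  | zero => norm_num [deformedHermite, deformedLaguerre]
  | one =>
    show deformedHermite δ 2 x = _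
    norm_num [deformedHermite, deformedLaguerre]
    ring
  | more n ih1 ih2 =>
    have e2 : 2 * (n + 1) = 2 * n + 1 + 1 := by ring
    rw [e2] at ih2
    have e4 : 2 * (n + 2) = 2 * n + 2 + 2 := by ring
    rw [e4]
    have E4 := hermite_rec δ (2 * n + 2) x
    have E3 := hermite_rec δ (2 * n + 1) x
    have E2 := hermite_rec δ (2 * n) x
    have lag := laguerre_rec (-1/2) δ n (x ^ 2)
    rw [eq_div_iff (by positivity : ((n : ℝ) + 2) ≠ 0)] at lag
    have hfac : (Nat.factorial (n + 2) : ℝ) = ((n : ℝ) + 2) * ((n : ℝ) + 1) * (Nat.factorial n : ℝ) := by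
      push_cast [Nat.factorial_succ]; ring
    have hfac1 : ((n + 1).factorial : ℝ) = ((n : ℝ) + 1) * (Nat.factorial n : ℝ) := by
      push_cast [Nat.factorial_succ]; ring
    push_cast at E4 E3 E2 ih1 ih2 ⊢
    rw [hfac1] at ih2
    rw [hfac]
    linear_combination E4 + 2 * x * E3
      + (2 * (2 * (n:ℝ) + 2) + (2 * (n:ℝ) + 2) * (2 * (n:ℝ) + 1) * δ) * E2
      + (4 * x ^ 2 - (2 * (2 * (n:ℝ) + 3) + (2 * (n:ℝ) + 3) * (2 * (n:ℝ) + 2) * δ)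
          - (2 * (2 * (n:ℝ) + 2) + (2 * (n:ℝ) + 2) * (2 * (n:ℝ) + 1) * δ)) * ih2
      - (2 * (2 * (n:ℝ) + 2) + (2 * (n:ℝ) + 2) * (2 * (n:ℝ) + 1) * δ)
          * (2 * (2 * (n:ℝ) + 1) + (2 * (n:ℝ) + 1) * (2 * (n:ℝ)) * δ) * ih1
      - (2:ℝ) ^ (2 * n + 4) * (-1 : ℝ) ^ n * ((n:ℝ) + 1) * (Nat.factorial n : ℝ) * lag

theorem deformedHermite_deformedLaguerre_even (δ : ℝ) (hδ : 0 < δ) (r : ℕ) (x : ℝ) :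
    ((2 : ℝ) ^ (2 * r))⁻¹ * deformedHermite δ (2 * r) x
      = (-1 : ℝ) ^ r * (Nat.factorial r : ℝ) * deformedLaguerre (-1/2) δ r (x ^ 2) := by
  rw [aux]
  rw [mul_assoc, mul_assoc, inv_mul_cancel_left₀ (by positivity)]
  ring
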